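/- Fix γ > 0 and 0 < σ_min < σ_max, and let λ₁(t) = λ_ξ(t) with ξ = 0 and λ₂(t) = λ_ξ(t) with ξ = γ. The matrix-valued function Σ(t) = λ₁(t) P̄ + λ₂(t) P̂ satisfies the Lyapunov differential equation Σ′(t) = −γ P̂ Σ(t) − γ Σ(t) P̂ + g(t)² I_K for all t ∈ ℝ, with initial condition Σ(0) = 0. -/

import Mathlib

attribute [local instance] Matrix.normedAddCommGroup Matrix.normedSpace

/-- `Σ(t) = λ₁(t) P̄ + λ₂(t) P̂` (with `λ₁ = λ_{ξ=0}`, `λ₂ = λ_{ξ=γ}`) satisfies the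
Lyapunov ODE `Σ′(t) = −γ P̂ Σ(t) − γ Σ(t) P̂ + g(t)² I_K` with `Σ(0) = 0`. -/
theorem stmt_9 (K : ℕ) (hK : 0 < K)
    (γ σmin σmax : ℝ) (hγ : 0 < γ) (hσmin : 0 < σmin) (hσ : σmin < σmax)
    (Pbar Phat : Matrix (Fin K) (Fin K) ℝ)
    (hPbar : Pbar = (K : ℝ)⁻¹ •
      Matrix.vecMulVec (fun _ : Fin K => (1 : ℝ)) (fun _ : Fin K => (1 : ℝ)))
    (hPhat : Phat = 1 - Pbar)
    (ρ : ℝ) (hρ : ρ = σmax / σmin)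
    (g : ℝ → ℝ) (hg : g = fun t => σmin * ρ ^ t * Real.sqrt (2 * Real.log ρ))
    (lam : ℝ → ℝ → ℝ)
    (hlam : lam = fun ξ t =>
      σmin ^ 2 * (ρ ^ (2 * t) - Real.exp (-(2 * ξ * t))) * Real.log ρ / (ξ + Real.log ρ))
    (lam1 lam2 : ℝ → ℝ) (hlam1 : lam1 = lam 0) (hlam2 : lam2 = lam γ)
    (S : ℝ → Matrix (Fin K) (Fin K) ℝ)
    (hS : S = fun t => lam1 t • Pbar + lam2 t • Phat) :
    (∀ t : ℝ,
        HasDerivAt S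
          ((-γ) • (Phat * S t) - γ • (S t * Phat) + (g t) ^ 2 • (1 : Matrix (Fin K) (Fin K) ℝ)) t) ∧
      S 0 = 0 := by
  have hρ1 : 1 < ρ := by
    rw [hρ]; rw [lt_div_iff₀ hσmin]; linarith
  have hρpos : 0 < ρ := lt_trans one_pos hρ1
  have hL : 0 < Real.log ρ := Real.log_pos hρ1
  set L := Real.log ρ with hLdef
  -- derivative of lam ξ
  have hlamderiv : ∀ ξ t : ℝ, 0 ≤ ξ →
      HasDerivAt (lam ξ)
        (σmin ^ 2 * L / (ξ + L) * (2 * L * ρ ^ (2 * t) + 2 * ξ * Real.exp (-(2 * ξ * t)))) t := by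
    intro ξ t hξ
    have hden : ξ + L ≠ 0 := by positivity
    have hA : HasDerivAt (fun t : ℝ => ρ ^ (2 * t)) (ρ ^ (2 * t) * L * 2) t := by
      have h := (Real.hasStrictDerivAt_const_rpow hρpos (2 * t)).hasDerivAt.comp t
        ((hasDerivAt_id t).const_mul 2)
      refine h.congr_deriv ?_
      rw [hLdef]; ring
    have hB : HasDerivAt (fun t : ℝ => Real.exp (-(2 * ξ * t)))
        (Real.exp (-(2 * ξ * t)) * -(2 * ξ)) t := by
      have := ((hasDerivAt_id t).const_mul (2 * ξ)).neg.exp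
      simpa using this
    have h := ((hA.sub hB).const_mul (σmin ^ 2 * L / (ξ + L)))
    have hfun : (fun t : ℝ => σmin ^ 2 * L / (ξ + L) * (ρ ^ (2 * t) - Real.exp (-(2 * ξ * t))))
        = lam ξ := by
      funext s; rw [hlam]; ring
    rw [← hfun]
    refine h.congr_deriv ?_
    ring
  have hKne : (K : ℝ) ≠ 0 := Nat.cast_ne_zero.mpr hK.ne'
  -- matrix algebra facts
  have hPbar2 : Pbar * Pbar = Pbar := by
    ext i j
    simp [hPbar, Matrix.mul_apply, Matrix.vecMulVec_apply, Finset.mul_sum, Finset.sum_const]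
    field_simp
  have hPhatPbar : Phat * Pbar = 0 := by
    rw [hPhat, sub_mul, one_mul, hPbar2, sub_self]
  have hPbarPhat : Pbar * Phat = 0 := by
    rw [hPhat, mul_sub, mul_one, hPbar2, sub_self]
  have hPhat2 : Phat * Phat = Phat := by
    rw [hPhat]
    simp [sub_mul, mul_sub, hPbar2]
  have hone : (1 : Matrix (Fin K) (Fin K) ℝ) = Pbar + Phat := by
    rw [hPhat]; abel
  constructor
  · intro t
    have hd1 := hlamderiv 0 t le_rfl
    have hd2 := hlamderiv γ t hγ.le
    rw [← hlam1] at hd1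
    rw [← hlam2] at hd2
    have hder : HasDerivAt S
        ((σmin ^ 2 * L / (0 + L) * (2 * L * ρ ^ (2 * t) + 2 * 0 * Real.exp (-(2 * 0 * t)))) • Pbar
          + (σmin ^ 2 * L / (γ + L) * (2 * L * ρ ^ (2 * t) + 2 * γ * Real.exp (-(2 * γ * t)))) • Phat) t := by
      rw [hS]
      exact (hd1.smul_const Pbar).add (hd2.smul_const Phat)
    convert hder using 1
    -- compute RHS matrix
    have hSmul : Phat * S t = lam2 t • Phat := by
      rw [hS]
      simp only [Matrix.mul_add, Matrix.mul_smul, hPhatPbar, hPhat2, smul_zero, zero_add]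
    have hSmul' : S t * Phat = lam2 t • Phat := by
      rw [hS]
      simp only [Matrix.add_mul, Matrix.smul_mul, hPbarPhat, hPhat2, smul_zero, zero_add]
    rw [hSmul, hSmul', hone]
    -- scalar identities
    have hg2 : (g t) ^ 2 = σmin ^ 2 * ρ ^ (2 * t) * (2 * L) := by
      rw [hg]
      have hsq : Real.sqrt (2 * L) ^ 2 = 2 * L := Real.sq_sqrt (by positivity)
      have hpow : ρ ^ (2 * t) = (ρ ^ t) ^ 2 := by
        rw [← Real.rpow_natCast (ρ ^ t) 2, ← Real.rpow_mul hρpos.le]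
        norm_num [mul_comm]
      rw [hpow, mul_pow, mul_pow, hsq]
    have hd1eq : σmin ^ 2 * L / (0 + L) * (2 * L * ρ ^ (2 * t) + 2 * 0 * Real.exp (-(2 * 0 * t)))
        = (g t) ^ 2 := by
      rw [hg2]; field_simp; ring
    have hd2eq : σmin ^ 2 * L / (γ + L) * (2 * L * ρ ^ (2 * t) + 2 * γ * Real.exp (-(2 * γ * t)))
        = (g t) ^ 2 - 2 * γ * lam2 t := by
      have hden : γ + L ≠ 0 := by positivity
      rw [hg2, hlam2, hlam]
      field_simp
      ring
    rw [hd1eq, hd2eq]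
    module
  · rw [hS]
    simp [hlam1, hlam2, hlam]
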